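/- The function Δ ↦ R_i(Δ) is convex on [Δ_min, Δ_max], and for every Δ with max_{A ∈ 𝒜_k} Δ_min,A ≤ Δ ≤ Δ_max one has R_i(Δ) ≤ min_{A ∈ 𝒜_k} R_A(Δ). -/

import Mathlib

noncomputable section

/-- A probability mass function on a finite type. -/
def IsPMF {T : Type*} [Fintype T] (p : T → ℝ) : Prop :=
  (∀ t, 0 ≤ p t) ∧ ∑ t, p t = 1

/-- Mutual information of a joint pmf `Q` on a product of two finite types;
terms with `Q p = 0` vanish since `0 * log _ = 0`. -/
def mutInfo {α β : Type*} [Fintype α] [Fintype β] (Q : α × β → ℝ) : ℝ :=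
  ∑ p : α × β, Q p * Real.log (Q p / ((∑ b, Q (p.1, b)) * (∑ a, Q (a, p.2))))

/-- The family `𝒜_k` of `k`-element subsets of `{1, …, m}`. -/
abbrev SetsK (m k : ℕ) := {A : Finset (Fin m) // A.card = k}

variable {m : ℕ} {X : Fin m → Type} [∀ i, Fintype (X i)] [∀ i, DecidableEq (X i)]
  [∀ i, Nonempty (X i)] {Y : Type} [Fintype Y] [Nonempty Y]

/-- Restriction of `x ∈ 𝒳_ℳ` to the coordinates in `A`. -/
def restr (A : Finset (Fin m)) (x : ∀ i, X i) : ∀ i : A, X i.1 := fun i => x i.1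

/-- The marginal pmf `P_{X_A}` of the coordinates in `A`. -/
def margA (P : (∀ i, X i) → ℝ) (A : Finset (Fin m)) (xA : ∀ i : A, X i.1) : ℝ :=
  ∑ x : ∀ i, X i, if restr A x = xA then P x else 0

/-- The modified distortion `d_A(x_A, y)`. -/
def dAk (P : (∀ i, X i) → ℝ) (d : (∀ i, X i) → Y → ℝ) (A : Finset (Fin m))
    (xA : ∀ i : A, X i.1) (y : Y) : ℝ :=
  (∑ x : ∀ i, X i, if restr A x = xA then P x * d x y else 0) / margA P A xA

/-- The fixed-set rate distortion function `R_A(Δ)`: the minimum of `I(X_A ∧ Y)` over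
joint pmfs of `(X_A, Y)` with first marginal `P_{X_A}` and `E[d_A(X_A,Y)] ≤ Δ`. -/
def RAk (P : (∀ i, X i) → ℝ) (d : (∀ i, X i) → Y → ℝ) (A : Finset (Fin m)) (Δ : ℝ) : ℝ :=
  sInf {r | ∃ Q : (∀ i : A, X i.1) × Y → ℝ, IsPMF Q ∧
    (∀ xA, ∑ y, Q (xA, y) = margA P A xA) ∧
    (∑ p : (∀ i : A, X i.1) × Y, Q p * dAk P d A p.1 p.2) ≤ Δ ∧ mutInfo Q = r}

/-- `Δ_min,A = Σ_{x_A} P_{X_A}(x_A) min_y d_A(x_A, y)`. -/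
def DminA (P : (∀ i, X i) → ℝ) (d : (∀ i, X i) → Y → ℝ) (A : Finset (Fin m)) : ℝ :=
  ∑ xA : ∀ i : A, X i.1,
    margA P A xA * Finset.univ.inf' Finset.univ_nonempty (fun y => dAk P d A xA y)

/-- A reconstruction kernel `W(·|A, x_A)`: a pmf on `𝒴` for each `A ∈ 𝒜_k` and each
value `x_A` of the sampled coordinates. -/
def IsKernelW (k : ℕ) (W : ∀ A : SetsK m k, (∀ i : A.1, X i.1) → Y → ℝ) : Prop :=
  ∀ A xA, IsPMF (W A xA)

/-- The conditional mutual information `I(X_S ∧ Y | S) = Σ_A P_S(A) I(X_A ∧ Y | S = A)`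
for a `k`-IRS `(P_S, W)`. -/
def condMI (k : ℕ) (P : (∀ i, X i) → ℝ) (PS : SetsK m k → ℝ)
    (W : ∀ A : SetsK m k, (∀ i : A.1, X i.1) → Y → ℝ) : ℝ :=
  ∑ A : SetsK m k, PS A *
    mutInfo (fun p : (∀ i : A.1, X i.1) × Y => margA P A.1 p.1 * W A p.1 p.2)

/-- The expected distortion `E[d(X,Y)]` for a `k`-IRS `(P_S, W)`. -/
def expDistIRS (k : ℕ) (P : (∀ i, X i) → ℝ) (d : (∀ i, X i) → Y → ℝ)
    (PS : SetsK m k → ℝ) (W : ∀ A : SetsK m k, (∀ i : A.1, X i.1) → Y → ℝ) : ℝ :=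
  ∑ A : SetsK m k, ∑ x : ∀ i, X i, ∑ y, PS A * P x * W A (restr A.1 x) y * d x y

/-- The SRDf `R_i(Δ)` for a `k`-IRS. -/
def Ri (k : ℕ) (P : (∀ i, X i) → ℝ) (d : (∀ i, X i) → Y → ℝ) (Δ : ℝ) : ℝ :=
  sInf {r | ∃ (PS : SetsK m k → ℝ) (W : ∀ A : SetsK m k, (∀ i : A.1, X i.1) → Y → ℝ),
    IsPMF PS ∧ IsKernelW k W ∧ expDistIRS k P d PS W ≤ Δ ∧ condMI k P PS W = r}

/-! ### Auxiliary information-theoretic lemmas -/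

open Real Finset

lemma logsum2 {a1 a2 b1 b2 : ℝ} (ha1 : 0 ≤ a1) (ha2 : 0 ≤ a2) (hb1 : 0 ≤ b1) (hb2 : 0 ≤ b2)
    (h1 : b1 = 0 → a1 = 0) (h2 : b2 = 0 → a2 = 0) :
    (a1 + a2) * Real.log ((a1 + a2) / (b1 + b2)) ≤
      a1 * Real.log (a1 / b1) + a2 * Real.log (a2 / b2) := by
  rcases eq_or_lt_of_le hb1 with hb1' | hb1'
  · rw [h1 hb1'.symm]; simp [← hb1']
  rcases eq_or_lt_of_le hb2 with hb2' | hb2'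
  · rw [h2 hb2'.symm]; simp [← hb2']
  have hb : 0 < b1 + b2 := by linarith
  have key := Real.convexOn_mul_log.2 (Set.mem_Ici.2 (div_nonneg ha1 hb1'.le))
    (Set.mem_Ici.2 (div_nonneg ha2 hb2'.le))
    (show (0:ℝ) ≤ b1 / (b1 + b2) by positivity) (show (0:ℝ) ≤ b2 / (b1 + b2) by positivity)
    (by field_simp)
  simp only [smul_eq_mul] at key
  have e1 : b1 / (b1 + b2) * (a1 / b1) + b2 / (b1 + b2) * (a2 / b2) = (a1 + a2) / (b1 + b2) := by
    field_simp
  rw [e1] at key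
  have := mul_le_mul_of_nonneg_left key hb.le
  calc (a1 + a2) * Real.log ((a1 + a2) / (b1 + b2))
      = (b1 + b2) * ((a1 + a2) / (b1 + b2) * Real.log ((a1 + a2) / (b1 + b2))) := by
        field_simp
    _ ≤ (b1 + b2) * (b1 / (b1 + b2) * (a1 / b1 * Real.log (a1 / b1)) +
          b2 / (b1 + b2) * (a2 / b2 * Real.log (a2 / b2))) := this
    _ = a1 * Real.log (a1 / b1) + a2 * Real.log (a2 / b2) := by
        field_simp

lemma gibbs {α : Type*} [Fintype α] {p q : α → ℝ} (hp : IsPMF p) (hq0 : ∀ a, 0 ≤ q a)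
    (hqs : ∑ a, q a = 1) (h : ∀ a, q a = 0 → p a = 0) :
    0 ≤ ∑ a, p a * Real.log (p a / q a) := by
  classical
  have key := Real.convexOn_mul_log.map_sum_le (t := Finset.univ) (w := q)
    (p := fun a => if q a = 0 then 1 else p a / q a) (fun i _ => hq0 i) hqs
    (fun i _ => by
      split
      · exact Set.mem_Ici.2 zero_le_one
      · exact Set.mem_Ici.2 (div_nonneg (hp.1 i) (hq0 i)))
  have e1 : ∑ i, q i • (if q i = 0 then (1:ℝ) else p i / q i) = 1 := by
    rw [← hp.2]
    refine Finset.sum_congr rfl fun i _ => ?_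
    by_cases hqi : q i = 0
    · simp [hqi, h i hqi]
    · rw [if_neg hqi, smul_eq_mul]; field_simp
  rw [e1] at key
  simp only [one_mul, Real.log_one, mul_one] at key
  refine le_trans (le_of_eq (by norm_num)) (le_trans key (le_of_eq ?_))
  refine Finset.sum_congr rfl fun i _ => ?_
  by_cases hqi : q i = 0
  · simp [hqi, h i hqi]
  · rw [if_neg hqi, smul_eq_mul]
    field_simp

lemma mutInfo_nonneg {α β : Type*} [Fintype α] [Fintype β] {Q : α × β → ℝ} (hQ : IsPMF Q) :
    0 ≤ mutInfo Q := by
  classical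
  refine gibbs hQ (fun a => mul_nonneg (Finset.sum_nonneg fun _ _ => hQ.1 _)
    (Finset.sum_nonneg fun _ _ => hQ.1 _)) ?_ ?_
  · have : ∑ r : α × β, (∑ b, Q (r.1, b)) * (∑ a, Q (a, r.2))
        = (∑ a : α, ∑ b : β, Q (a, b)) * (∑ b : β, ∑ a : α, Q (a, b)) := by
      rw [Fintype.sum_prod_type]
      dsimp only
      rw [← Finset.sum_mul_sum]
    rw [this]
    have h1 : ∑ a : α, ∑ b : β, Q (a, b) = 1 := by
      rw [← Fintype.sum_prod_type]; exact hQ.2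
    have h2 : ∑ b : β, ∑ a : α, Q (a, b) = 1 := by
      rw [Finset.sum_comm, ← Fintype.sum_prod_type]; exact hQ.2
    rw [h1, h2, mul_one]
  · rintro ⟨a, b⟩ hab
    rcases mul_eq_zero.1 hab with h0 | h0
    · exact Finset.sum_eq_zero_iff_of_nonneg (fun y _ => hQ.1 (a, y)) |>.1 h0 b (Finset.mem_univ b)
    · exact Finset.sum_eq_zero_iff_of_nonneg (fun x _ => hQ.1 (x, b)) |>.1 h0 a (Finset.mem_univ a)

lemma mutInfo_channel_convex' {α β : Type*} [Fintype α] [Fintype β]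
    {pX : α → ℝ} (hpos : ∀ a, 0 < pX a)
    {W1 W2 : α → β → ℝ} (hW1 : ∀ a, IsPMF (W1 a)) (hW2 : ∀ a, IsPMF (W2 a))
    {μ : ℝ} (hμ0 : 0 < μ) (hμ1 : μ < 1) :
    mutInfo (fun p : α × β => pX p.1 * (μ * W1 p.1 p.2 + (1 - μ) * W2 p.1 p.2)) ≤
      μ * mutInfo (fun p : α × β => pX p.1 * W1 p.1 p.2)
      + (1 - μ) * mutInfo (fun p : α × β => pX p.1 * W2 p.1 p.2) := by
  classical
  have hν0 : 0 < 1 - μ := by linarith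
  set q1 : β → ℝ := fun y => ∑ a, pX a * W1 a y with hq1
  set q2 : β → ℝ := fun y => ∑ a, pX a * W2 a y with hq2
  have hq1n : ∀ y, 0 ≤ q1 y := fun y =>
    Finset.sum_nonneg fun a _ => mul_nonneg (hpos a).le ((hW1 a).1 y)
  have hq2n : ∀ y, 0 ≤ q2 y := fun y =>
    Finset.sum_nonneg fun a _ => mul_nonneg (hpos a).le ((hW2 a).1 y)
  have hrow1 : ∀ a : α, ∑ b, pX a * W1 a b = pX a := fun a => by
    rw [← Finset.mul_sum, (hW1 a).2, mul_one]
  have hrow2 : ∀ a : α, ∑ b, pX a * W2 a b = pX a := fun a => by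
    rw [← Finset.mul_sum, (hW2 a).2, mul_one]
  have hrowm : ∀ a : α, ∑ b, pX a * (μ * W1 a b + (1 - μ) * W2 a b) = pX a := fun a => by
    have : ∑ b, pX a * (μ * W1 a b + (1 - μ) * W2 a b)
        = μ * ∑ b, pX a * W1 a b + (1 - μ) * ∑ b, pX a * W2 a b := by
      rw [Finset.mul_sum, Finset.mul_sum, ← Finset.sum_add_distrib]
      exact Finset.sum_congr rfl fun b _ => by ring
    rw [this, hrow1, hrow2]; ring
  have hcolm : ∀ y : β, ∑ a, pX a * (μ * W1 a y + (1 - μ) * W2 a y)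
      = μ * q1 y + (1 - μ) * q2 y := fun y => by
    rw [hq1, hq2, Finset.mul_sum, Finset.mul_sum, ← Finset.sum_add_distrib]
    exact Finset.sum_congr rfl fun a _ => by ring
  rw [mutInfo, mutInfo, mutInfo, Finset.mul_sum, Finset.mul_sum, ← Finset.sum_add_distrib]
  refine Finset.sum_le_sum fun p _ => ?_
  obtain ⟨x, y⟩ := p
  dsimp only
  rw [hrow1, hrow2, hrowm, hcolm]
  have f1 : (∑ a : α, pX a * W1 a y) = q1 y := rfl
  have f2 : (∑ a : α, pX a * W2 a y) = q2 y := rfl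
  rw [f1, f2]
  set a1 := μ * (pX x * W1 x y) with ha1d
  set a2 := (1 - μ) * (pX x * W2 x y) with ha2d
  set b1 := μ * (pX x * q1 y) with hb1d
  set b2 := (1 - μ) * (pX x * q2 y) with hb2d
  have key := logsum2 (a1 := a1) (a2 := a2) (b1 := b1) (b2 := b2)
    (mul_nonneg hμ0.le (mul_nonneg (hpos x).le ((hW1 x).1 y)))
    (mul_nonneg hν0.le (mul_nonneg (hpos x).le ((hW2 x).1 y)))
    (mul_nonneg hμ0.le (mul_nonneg (hpos x).le (hq1n y)))
    (mul_nonneg hν0.le (mul_nonneg (hpos x).le (hq2n y)))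
    (fun hb => by
      have hq0 : q1 y = 0 := by
        rcases mul_eq_zero.1 hb with h | h
        · exact absurd h (ne_of_gt hμ0)
        · rcases mul_eq_zero.1 h with h' | h'
          · exact absurd h' (ne_of_gt (hpos x))
          · exact h'
      have : pX x * W1 x y = 0 :=
        (Finset.sum_eq_zero_iff_of_nonneg
          (fun a _ => mul_nonneg (hpos a).le ((hW1 a).1 y))).1 hq0 x (Finset.mem_univ x)
      rw [ha1d, this, mul_zero])
    (fun hb => by
      have hq0 : q2 y = 0 := by
        rcases mul_eq_zero.1 hb with h | h
        · exact absurd h (ne_of_gt hν0)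
        · rcases mul_eq_zero.1 h with h' | h'
          · exact absurd h' (ne_of_gt (hpos x))
          · exact h'
      have : pX x * W2 x y = 0 :=
        (Finset.sum_eq_zero_iff_of_nonneg
          (fun a _ => mul_nonneg (hpos a).le ((hW2 a).1 y))).1 hq0 x (Finset.mem_univ x)
      rw [ha2d, this, mul_zero])
  have e0 : pX x * (μ * W1 x y + (1 - μ) * W2 x y) = a1 + a2 := by rw [ha1d, ha2d]; ring
  have e0' : pX x * (μ * q1 y + (1 - μ) * q2 y) = b1 + b2 := by rw [hb1d, hb2d]; ring
  have e1 : a1 * Real.log (a1 / b1)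
      = μ * (pX x * W1 x y * Real.log (pX x * W1 x y / (pX x * q1 y))) := by
    rw [ha1d, hb1d, mul_div_mul_left _ _ (ne_of_gt hμ0)]; ring
  have e2 : a2 * Real.log (a2 / b2)
      = (1 - μ) * (pX x * W2 x y * Real.log (pX x * W2 x y / (pX x * q2 y))) := by
    rw [ha2d, hb2d, mul_div_mul_left _ _ (ne_of_gt hν0)]; ring
  rw [e0, e0', ← e1, ← e2]
  exact key

/-! ### Marginal lemmas -/

lemma margA_nonneg {P : (∀ i, X i) → ℝ} (hP0 : ∀ x, 0 ≤ P x) (A : Finset (Fin m))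
    (xA : ∀ i : A, X i.1) : 0 ≤ margA P A xA :=
  Finset.sum_nonneg fun x _ => by by_cases h : restr A x = xA <;> simp [h, hP0 x]

lemma margA_pos {P : (∀ i, X i) → ℝ} (hfull : ∀ x, 0 < P x) (A : Finset (Fin m))
    (xA : ∀ i : A, X i.1) : 0 < margA P A xA := by
  classical
  have hx0 : restr A (fun i => if h : i ∈ A then xA ⟨i, h⟩ else Classical.arbitrary (X i)) = xA := by
    funext i
    simp [restr]
  refine Finset.sum_pos' (fun x _ => by by_cases h : restr A x = xA <;> simp [h, (hfull x).le])
    ⟨(fun i => if h : i ∈ A then xA ⟨i, h⟩ else Classical.arbitrary (X i)),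
      Finset.mem_univ _, ?_⟩
  rw [if_pos hx0]
  exact hfull _

lemma margA_sum {P : (∀ i, X i) → ℝ} (hs : ∑ x, P x = 1) (A : Finset (Fin m)) :
    ∑ xA : ∀ i : A, X i.1, margA P A xA = 1 := by
  classical
  rw [show (∑ xA : ∀ i : A, X i.1, margA P A xA)
      = ∑ x : ∀ i, X i, ∑ xA : ∀ i : A, X i.1, if restr A x = xA then P x else 0 from
    Finset.sum_comm, ← hs]
  exact Finset.sum_congr rfl fun x _ => by rw [Finset.sum_ite_eq]; simp

lemma margA_mul_dAk {P : (∀ i, X i) → ℝ} (hfull : ∀ x, 0 < P x)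
    (d : (∀ i, X i) → Y → ℝ) (A : Finset (Fin m)) (xA : ∀ i : A, X i.1) (y : Y) :
    margA P A xA * dAk P d A xA y = ∑ x : ∀ i, X i, if restr A x = xA then P x * d x y else 0 := by
  rw [dAk, mul_comm, div_mul_cancel₀ _ (margA_pos hfull A xA).ne']

lemma joint_isPMF {P : (∀ i, X i) → ℝ} (hP : IsPMF P) (A : Finset (Fin m))
    {W : (∀ i : A, X i.1) → Y → ℝ} (hW : ∀ xA, IsPMF (W xA)) :
    IsPMF (fun p : (∀ i : A, X i.1) × Y => margA P A p.1 * W p.1 p.2) := by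
  constructor
  · exact fun p => mul_nonneg (margA_nonneg hP.1 A p.1) ((hW p.1).1 p.2)
  · rw [Fintype.sum_prod_type]
    rw [show (∑ xA : ∀ i : A, X i.1, ∑ y, margA P A xA * W xA y)
        = ∑ xA : ∀ i : A, X i.1, margA P A xA from
      Finset.sum_congr rfl fun xA _ => by rw [← Finset.mul_sum, (hW xA).2, mul_one]]
    exact margA_sum hP.2 A

lemma key_dist {P : (∀ i, X i) → ℝ} (hfull : ∀ x, 0 < P x)
    (d : (∀ i, X i) → Y → ℝ) (A : Finset (Fin m)) (f : (∀ i : A, X i.1) → Y → ℝ) :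
    ∑ x : ∀ i, X i, ∑ y, P x * f (restr A x) y * d x y
      = ∑ xA : ∀ i : A, X i.1, ∑ y, f xA y * (margA P A xA * dAk P d A xA y) := by
  classical
  have step : ∀ (xA : ∀ i : A, X i.1) (y : Y), f xA y * (margA P A xA * dAk P d A xA y)
      = ∑ x : ∀ i, X i, if restr A x = xA then f xA y * (P x * d x y) else 0 := by
    intro xA y
    rw [margA_mul_dAk hfull, Finset.mul_sum]
    exact Finset.sum_congr rfl fun x _ => by split <;> simp
  calc ∑ x : ∀ i, X i, ∑ y, P x * f (restr A x) y * d x y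
      = ∑ x : ∀ i, X i, ∑ y,
          ∑ xA : ∀ i : A, X i.1, if restr A x = xA then f xA y * (P x * d x y) else 0 := by
        refine Finset.sum_congr rfl fun x _ => Finset.sum_congr rfl fun y _ => ?_
        rw [Finset.sum_ite_eq]
        simp only [Finset.mem_univ, if_true]
        ring
    _ = ∑ x : ∀ i, X i, ∑ xA : ∀ i : A, X i.1, ∑ y,
          (if restr A x = xA then f xA y * (P x * d x y) else 0) :=
        Finset.sum_congr rfl fun x _ => Finset.sum_comm
    _ = ∑ xA : ∀ i : A, X i.1, ∑ x : ∀ i, X i, ∑ y,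
          (if restr A x = xA then f xA y * (P x * d x y) else 0) := Finset.sum_comm
    _ = ∑ xA : ∀ i : A, X i.1, ∑ y,
          ∑ x : ∀ i, X i, if restr A x = xA then f xA y * (P x * d x y) else 0 :=
        Finset.sum_congr rfl fun xA _ => Finset.sum_comm
    _ = ∑ xA : ∀ i : A, X i.1, ∑ y, f xA y * (margA P A xA * dAk P d A xA y) := by
        exact Finset.sum_congr rfl fun xA _ => Finset.sum_congr rfl fun y _ => (step xA y).symm

lemma mix_feasible (k : ℕ) {P : (∀ i, X i) → ℝ} (hP : IsPMF P) (hfull : ∀ x, 0 < P x)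
    (d : (∀ i, X i) → Y → ℝ)
    (PS1 PS2 : SetsK m k → ℝ) (W1 W2 : ∀ A : SetsK m k, (∀ i : A.1, X i.1) → Y → ℝ)
    (hPS1 : IsPMF PS1) (hPS2 : IsPMF PS2) (hW1 : IsKernelW k W1) (hW2 : IsKernelW k W2)
    (a b : ℝ) (ha : 0 ≤ a) (hb : 0 ≤ b) (hab : a + b = 1) :
    ∃ (PS : SetsK m k → ℝ) (W : ∀ A : SetsK m k, (∀ i : A.1, X i.1) → Y → ℝ),
      IsPMF PS ∧ IsKernelW k W ∧
      expDistIRS k P d PS W = a * expDistIRS k P d PS1 W1 + b * expDistIRS k P d PS2 W2 ∧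
      condMI k P PS W ≤ a * condMI k P PS1 W1 + b * condMI k P PS2 W2 := by
  classical
  set PS : SetsK m k → ℝ := fun A => a * PS1 A + b * PS2 A with hPSdef
  set W : ∀ A : SetsK m k, (∀ i : A.1, X i.1) → Y → ℝ := fun A xA y =>
    if PS A = 0 then W1 A xA y
    else (a * PS1 A / PS A) * W1 A xA y + (b * PS2 A / PS A) * W2 A xA y with hWdef
  have hPSn : ∀ A, 0 ≤ PS A := fun A =>
    add_nonneg (mul_nonneg ha (hPS1.1 A)) (mul_nonneg hb (hPS2.1 A))
  have hPS : IsPMF PS := by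
    refine ⟨hPSn, ?_⟩
    rw [hPSdef]
    rw [Finset.sum_add_distrib, ← Finset.mul_sum, ← Finset.mul_sum, hPS1.2, hPS2.2]
    simpa using hab
  have hzero : ∀ A : SetsK m k, PS A = 0 → a * PS1 A = 0 ∧ b * PS2 A = 0 := by
    intro A h
    have h1 : 0 ≤ a * PS1 A := mul_nonneg ha (hPS1.1 A)
    have h2 : 0 ≤ b * PS2 A := mul_nonneg hb (hPS2.1 A)
    have : a * PS1 A + b * PS2 A = 0 := h
    constructor <;> linarith
  have hWA : ∀ A : SetsK m k, PS A ≠ 0 → ∀ xA y,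
      W A xA y = (a * PS1 A / PS A) * W1 A xA y + (b * PS2 A / PS A) * W2 A xA y := by
    intro A h xA y
    rw [hWdef]
    simp only [if_neg h]
  have hW : IsKernelW k W := by
    intro A xA
    by_cases h : PS A = 0
    · constructor
      · intro y; rw [hWdef]; simp only [if_pos h]; exact (hW1 A xA).1 y
      · rw [show (∑ y, W A xA y) = ∑ y, W1 A xA y from
          Finset.sum_congr rfl fun y _ => by rw [hWdef]; simp only [if_pos h]]
        exact (hW1 A xA).2
    · have hpos : 0 < PS A := lt_of_le_of_ne (hPSn A) (Ne.symm h)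
      constructor
      · intro y
        rw [hWA A h]
        exact add_nonneg
          (mul_nonneg (div_nonneg (mul_nonneg ha (hPS1.1 A)) hpos.le) ((hW1 A xA).1 y))
          (mul_nonneg (div_nonneg (mul_nonneg hb (hPS2.1 A)) hpos.le) ((hW2 A xA).1 y))
      · rw [show (∑ y, W A xA y)
            = (a * PS1 A / PS A) * ∑ y, W1 A xA y + (b * PS2 A / PS A) * ∑ y, W2 A xA y by
          rw [Finset.mul_sum, Finset.mul_sum, ← Finset.sum_add_distrib]
          exact Finset.sum_congr rfl fun y _ => hWA A h xA y]
        rw [(hW1 A xA).2, (hW2 A xA).2, mul_one, mul_one]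
        field_simp
        rw [hPSdef]
  have hPSW : ∀ (A : SetsK m k) (xA : ∀ i : A.1, X i.1) (y : Y),
      PS A * W A xA y = a * PS1 A * W1 A xA y + b * PS2 A * W2 A xA y := by
    intro A xA y
    by_cases h : PS A = 0
    · rw [h, zero_mul, (hzero A h).1, (hzero A h).2, zero_mul, zero_mul, add_zero]
    · rw [hWA A h xA y]
      field_simp
  refine ⟨PS, W, hPS, hW, ?_, ?_⟩
  · -- expected distortion is exactly the convex combination
    rw [expDistIRS, expDistIRS, expDistIRS]
    rw [Finset.mul_sum, Finset.mul_sum, ← Finset.sum_add_distrib]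
    refine Finset.sum_congr rfl fun A _ => ?_
    rw [Finset.mul_sum, Finset.mul_sum, ← Finset.sum_add_distrib]
    refine Finset.sum_congr rfl fun x _ => ?_
    rw [Finset.mul_sum, Finset.mul_sum, ← Finset.sum_add_distrib]
    refine Finset.sum_congr rfl fun y _ => ?_
    linear_combination (P x * d x y) * hPSW A (restr A.1 x) y
  · -- conditional mutual information
    rw [condMI, condMI, condMI]
    rw [Finset.mul_sum, Finset.mul_sum, ← Finset.sum_add_distrib]
    refine Finset.sum_le_sum fun A _ => ?_
    by_cases h : PS A = 0
    · rw [h, zero_mul,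
        show a * (PS1 A * _) = (a * PS1 A) * _ from (mul_assoc a (PS1 A) _).symm,
        show b * (PS2 A * _) = (b * PS2 A) * _ from (mul_assoc b (PS2 A) _).symm,
        (hzero A h).1, (hzero A h).2, zero_mul, zero_mul, add_zero]
    · have hpos : 0 < PS A := lt_of_le_of_ne (hPSn A) (Ne.symm h)
      set μ : ℝ := a * PS1 A / PS A with hμdef
      have hμn : 0 ≤ μ := div_nonneg (mul_nonneg ha (hPS1.1 A)) hpos.le
      have hsum1 : μ + b * PS2 A / PS A = 1 := by
        rw [hμdef, ← add_div, hPSdef]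
        exact div_self h
      have hν : b * PS2 A / PS A = 1 - μ := by linarith
      have hνn : 0 ≤ 1 - μ := by
        rw [← hν]; exact div_nonneg (mul_nonneg hb (hPS2.1 A)) hpos.le
      have hWAμ : ∀ xA y, W A xA y = μ * W1 A xA y + (1 - μ) * W2 A xA y := by
        intro xA y
        rw [hWA A h xA y, hν, hμdef]
      have he1 : PS A * μ = a * PS1 A := by rw [hμdef]; field_simp
      have he2 : PS A * (1 - μ) = b * PS2 A := by rw [← hν]; field_simp
      have hfun : (fun p : (∀ i : A.1, X i.1) × Y => margA P A.1 p.1 * W A p.1 p.2)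
          = fun p : (∀ i : A.1, X i.1) × Y =>
              margA P A.1 p.1 * (μ * W1 A p.1 p.2 + (1 - μ) * W2 A p.1 p.2) :=
        funext fun p => by rw [hWAμ]
      rw [hfun]
      rcases eq_or_lt_of_le hμn with hμ0 | hμ0
      · -- μ = 0 : W A = W2 A
        have h2 : b * PS2 A = PS A := by
          rw [← he2, ← hμ0]; ring
        have h1 : a * PS1 A = 0 := by rw [← he1, ← hμ0]; ring
        have hfun2 : (fun p : (∀ i : A.1, X i.1) × Y =>
              margA P A.1 p.1 * (μ * W1 A p.1 p.2 + (1 - μ) * W2 A p.1 p.2))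
            = fun p : (∀ i : A.1, X i.1) × Y => margA P A.1 p.1 * W2 A p.1 p.2 :=
          funext fun p => by rw [← hμ0]; ring
        rw [hfun2, ← mul_assoc, ← mul_assoc, h1, h2, zero_mul, zero_add]
      rcases eq_or_lt_of_le (by linarith : μ ≤ 1) with hμ1 | hμ1
      · -- μ = 1 : W A = W1 A
        have h1 : a * PS1 A = PS A := by rw [← he1, hμ1, mul_one]
        have h2 : b * PS2 A = 0 := by rw [← he2, hμ1]; ring
        have hfun2 : (fun p : (∀ i : A.1, X i.1) × Y =>
              margA P A.1 p.1 * (μ * W1 A p.1 p.2 + (1 - μ) * W2 A p.1 p.2))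
            = fun p : (∀ i : A.1, X i.1) × Y => margA P A.1 p.1 * W1 A p.1 p.2 :=
          funext fun p => by rw [hμ1]; ring
        rw [hfun2, ← mul_assoc, ← mul_assoc, h1, h2, zero_mul, add_zero]
      · -- 0 < μ < 1 : convexity of mutual information in the channel
        have hconv := mutInfo_channel_convex' (pX := margA P A.1)
          (margA_pos hfull A.1) (hW1 A) (hW2 A) hμ0 hμ1
        calc PS A * mutInfo (fun p : (∀ i : A.1, X i.1) × Y =>
                margA P A.1 p.1 * (μ * W1 A p.1 p.2 + (1 - μ) * W2 A p.1 p.2))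
            ≤ PS A * (μ * mutInfo (fun p : (∀ i : A.1, X i.1) × Y =>
                  margA P A.1 p.1 * W1 A p.1 p.2)
                + (1 - μ) * mutInfo (fun p : (∀ i : A.1, X i.1) × Y =>
                  margA P A.1 p.1 * W2 A p.1 p.2)) :=
              mul_le_mul_of_nonneg_left hconv hpos.le
          _ = (PS A * μ) * mutInfo (fun p : (∀ i : A.1, X i.1) × Y =>
                  margA P A.1 p.1 * W1 A p.1 p.2)
              + (PS A * (1 - μ)) * mutInfo (fun p : (∀ i : A.1, X i.1) × Y =>
                  margA P A.1 p.1 * W2 A p.1 p.2) := by ring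
          _ = a * (PS1 A * mutInfo (fun p : (∀ i : A.1, X i.1) × Y =>
                  margA P A.1 p.1 * W1 A p.1 p.2))
              + b * (PS2 A * mutInfo (fun p : (∀ i : A.1, X i.1) × Y =>
                  margA P A.1 p.1 * W2 A p.1 p.2)) := by
            rw [he1, he2]; ring

/-- `Δ ↦ R_i(Δ)` is convex on `[Δ_min, Δ_max]`, and whenever
`Δ_min,A ≤ Δ` for every `A ∈ 𝒜_k` (i.e. `max_A Δ_min,A ≤ Δ`) and `Δ ≤ Δ_max`, one has
`R_i(Δ) ≤ R_A(Δ)` for every `A ∈ 𝒜_k` (i.e. `R_i(Δ) ≤ min_A R_A(Δ)`). -/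
theorem stmt9 (k : ℕ) (hk1 : 1 ≤ k) (hkm : k ≤ m)
    (P : (∀ i, X i) → ℝ) (hP : IsPMF P) (hfull : ∀ x, 0 < P x)
    (d : (∀ i, X i) → Y → ℝ) (hd : ∀ x y, 0 ≤ d x y) :
    ConvexOn ℝ
      (Set.Icc (sInf (Set.range fun A : SetsK m k => DminA P d A.1))
        (Finset.univ.inf' Finset.univ_nonempty (fun y => ∑ x, P x * d x y)))
      (fun Δ => Ri k P d Δ) ∧
    (∀ Δ : ℝ, (∀ A : SetsK m k, DminA P d A.1 ≤ Δ) →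
      Δ ≤ Finset.univ.inf' Finset.univ_nonempty (fun y => ∑ x, P x * d x y) →
      ∀ A : SetsK m k, Ri k P d Δ ≤ RAk P d A.1 Δ) := by
  classical
  have hSK : Nonempty (SetsK m k) := by
    obtain ⟨t, -, ht⟩ := Finset.exists_subset_card_eq (s := (Finset.univ : Finset (Fin m))) (n := k)
      (by simpa using hkm)
    exact ⟨⟨t, ht⟩⟩
  set S : ℝ → Set ℝ := fun Δ => {r | ∃ (PS : SetsK m k → ℝ)
      (W : ∀ A : SetsK m k, (∀ i : A.1, X i.1) → Y → ℝ),
      IsPMF PS ∧ IsKernelW k W ∧ expDistIRS k P d PS W ≤ Δ ∧ condMI k P PS W = r} with hSdef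
  have hRi : ∀ Δ, Ri k P d Δ = sInf (S Δ) := fun Δ => rfl
  have hlb : ∀ Δ, ∀ r ∈ S Δ, 0 ≤ r := by
    rintro Δ r ⟨PS, W, hPS, hW, -, hc⟩
    rw [← hc, condMI]
    exact Finset.sum_nonneg fun A _ => mul_nonneg (hPS.1 A)
      (mutInfo_nonneg (joint_isPMF hP A.1 (hW A)))
  have hBdd : ∀ Δ, BddBelow (S Δ) := fun Δ => ⟨0, fun r hr => hlb Δ r hr⟩
  -- choice of minimizing reconstruction
  have hys : ∀ (A : Finset (Fin m)) (xA : ∀ i : A, X i.1), ∃ y : Y,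
      dAk P d A xA y = Finset.univ.inf' Finset.univ_nonempty (fun y => dAk P d A xA y) := by
    intro A xA
    obtain ⟨y, -, hy⟩ := Finset.exists_mem_eq_inf' (H := Finset.univ_nonempty) (dAk P d A xA)
    exact ⟨y, hy.symm⟩
  choose ystar hystar using hys
  -- the deterministic scheme concentrated on a fixed A0 achieves distortion DminA A0
  have hdelta : ∀ A0 : SetsK m k, ∃ (PS : SetsK m k → ℝ)
      (W : ∀ A : SetsK m k, (∀ i : A.1, X i.1) → Y → ℝ),
      IsPMF PS ∧ IsKernelW k W ∧ expDistIRS k P d PS W = DminA P d A0.1 := by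
    intro A0
    refine ⟨fun A => if A = A0 then 1 else 0,
      fun A xA y => if y = ystar A.1 xA then 1 else 0,
      ⟨fun A => by dsimp only; split <;> norm_num, by simp⟩,
      fun A xA => ⟨fun y => by dsimp only; split <;> norm_num, by simp⟩, ?_⟩
    have hone : (if A0 = A0 then (1:ℝ) else 0) = 1 := if_pos rfl
    rw [expDistIRS, Finset.sum_eq_single A0]
    · simp only [hone, if_true, one_mul]
      rw [key_dist hfull d A0.1 (fun xA y => if y = ystar A0.1 xA then 1 else 0)]
      rw [DminA]
      refine Finset.sum_congr rfl fun xA _ => ?_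
      rw [show (∑ y, (if y = ystar A0.1 xA then (1:ℝ) else 0)
            * (margA P A0.1 xA * dAk P d A0.1 xA y))
          = margA P A0.1 xA * dAk P d A0.1 xA (ystar A0.1 xA) by
        simp [ite_mul]]
      rw [hystar]
    · intro A _ hA
      exact Finset.sum_eq_zero fun x _ => Finset.sum_eq_zero fun y _ => by
        rw [if_neg hA, zero_mul, zero_mul, zero_mul]
    · intro h; exact absurd (Finset.mem_univ A0) h
  have hfeas : ∀ Δ, sInf (Set.range fun A : SetsK m k => DminA P d A.1) ≤ Δ →
      (S Δ).Nonempty := by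
    intro Δ hΔ
    obtain ⟨A0, hA0⟩ := Set.Nonempty.csInf_mem
      (Set.range_nonempty (fun A : SetsK m k => DminA P d A.1)) (Set.finite_range _)
    obtain ⟨PS, W, hPS, hW, hE⟩ := hdelta A0
    exact ⟨condMI k P PS W, PS, W, hPS, hW, by rw [hE]; exact (le_of_eq hA0).trans hΔ, rfl⟩
  constructor
  · -- convexity
    refine ⟨convex_Icc _ _, ?_⟩
    intro Δ1 h1 Δ2 h2 a b ha hb hab
    simp only [smul_eq_mul]
    rcases eq_or_lt_of_le ha with ha0 | ha0
    · have hb1 : b = 1 := by linarith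
      rw [← ha0, hb1]; norm_num
    rcases eq_or_lt_of_le hb with hb0 | hb0
    · have ha1 : a = 1 := by linarith
      rw [← hb0, ha1]; norm_num
    have hS1 := hfeas Δ1 h1.1
    have hS2 := hfeas Δ2 h2.1
    have key : ∀ r1 ∈ S Δ1, ∀ r2 ∈ S Δ2,
        Ri k P d (a * Δ1 + b * Δ2) ≤ a * r1 + b * r2 := by
      rintro r1 ⟨PS1, W1, hPS1, hW1, hE1, hc1⟩ r2 ⟨PS2, W2, hPS2, hW2, hE2, hc2⟩
      obtain ⟨PS, W, hPS, hW, hE, hC⟩ :=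
        mix_feasible k hP hfull d PS1 PS2 W1 W2 hPS1 hPS2 hW1 hW2 a b ha hb hab
      have hmem : condMI k P PS W ∈ S (a * Δ1 + b * Δ2) :=
        ⟨PS, W, hPS, hW, by
          rw [hE]
          exact add_le_add (mul_le_mul_of_nonneg_left hE1 ha)
            (mul_le_mul_of_nonneg_left hE2 hb), rfl⟩
      calc Ri k P d (a * Δ1 + b * Δ2) ≤ condMI k P PS W := by
            rw [hRi]; exact csInf_le (hBdd _) hmem
        _ ≤ a * r1 + b * r2 := by rw [← hc1, ← hc2]; exact hC
    show Ri k P d (a * Δ1 + b * Δ2) ≤ a * Ri k P d Δ1 + b * Ri k P d Δ2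
    rw [hRi Δ1, hRi Δ2]
    have step1 : ∀ r1 ∈ S Δ1, Ri k P d (a * Δ1 + b * Δ2) ≤ a * r1 + b * sInf (S Δ2) := by
      intro r1 hr1
      have h2' : (Ri k P d (a * Δ1 + b * Δ2) - a * r1) / b ≤ sInf (S Δ2) :=
        le_csInf hS2 fun r2 hr2 => by
          rw [div_le_iff₀ hb0]; linarith [key r1 hr1 r2 hr2]
      rw [div_le_iff₀ hb0] at h2'
      linarith
    have step2 : (Ri k P d (a * Δ1 + b * Δ2) - b * sInf (S Δ2)) / a ≤ sInf (S Δ1) :=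
      le_csInf hS1 fun r1 hr1 => by
        rw [div_le_iff₀ ha0]; linarith [step1 r1 hr1]
    rw [div_le_iff₀ ha0] at step2
    linarith
  · -- comparison with the fixed-set rate-distortion functions
    intro Δ hmax hhi A
    have hWA0 : ∀ (Q : ((∀ i : A.1, X i.1) × Y) → ℝ) (xA : ∀ i : A.1, X i.1) (y : Y),
        (if h : A = A then Q (h ▸ xA, y) / margA P A.1 (h ▸ xA)
          else (Fintype.card Y : ℝ)⁻¹) = Q (xA, y) / margA P A.1 xA := by
      intro Q xA y
      rw [dif_pos rfl]
    have hsub : {r | ∃ Q : (∀ i : A.1, X i.1) × Y → ℝ, IsPMF Q ∧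
        (∀ xA, ∑ y, Q (xA, y) = margA P A.1 xA) ∧
        (∑ p : (∀ i : A.1, X i.1) × Y, Q p * dAk P d A.1 p.1 p.2) ≤ Δ ∧ mutInfo Q = r}
        ⊆ S Δ := by
      rintro r ⟨Q, hQ, hmarg, hdist, hmi⟩
      refine ⟨fun A' => if A' = A then 1 else 0,
        fun A' xA y => if h : A' = A then Q (h ▸ xA, y) / margA P A.1 (h ▸ xA)
          else (Fintype.card Y : ℝ)⁻¹,
        ⟨fun A' => by dsimp only; split <;> norm_num, by simp⟩, ?_, ?_, ?_⟩
      · -- kernel property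
        intro A' xA
        by_cases h : A' = A
        · constructor
          · intro y
            dsimp only
            rw [dif_pos h]
            exact div_nonneg (hQ.1 _) (margA_nonneg hP.1 _ _)
          · rw [show (∑ y, if h : A' = A then Q (h ▸ xA, y) / margA P A.1 (h ▸ xA)
                else (Fintype.card Y : ℝ)⁻¹)
                = ∑ y, Q (h ▸ xA, y) / margA P A.1 (h ▸ xA) from
              Finset.sum_congr rfl fun y _ => dif_pos h]
            rw [← Finset.sum_div, hmarg, div_self (margA_pos hfull A.1 _).ne']
        · constructor
          · intro y; dsimp only; rw [dif_neg h]; positivity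
          · rw [show (∑ y, if h' : A' = A then Q (h' ▸ xA, y) / margA P A.1 (h' ▸ xA)
                else (Fintype.card Y : ℝ)⁻¹) = ∑ _y : Y, (Fintype.card Y : ℝ)⁻¹ from
              Finset.sum_congr rfl fun y _ => dif_neg h]
            rw [Finset.sum_const, Finset.card_univ, nsmul_eq_mul]
            exact mul_inv_cancel₀ (Nat.cast_ne_zero.2 Fintype.card_ne_zero)
      · -- expected distortion
        have hone : (if A = A then (1:ℝ) else 0) = 1 := if_pos rfl
        rw [expDistIRS, Finset.sum_eq_single A]
        · simp only [hone, if_true, dite_true, one_mul, hWA0]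
          rw [key_dist hfull d A.1 (fun xA y => Q (xA, y) / margA P A.1 xA)]
          rw [show (∑ xA : ∀ i : A.1, X i.1, ∑ y, Q (xA, y) / margA P A.1 xA *
                (margA P A.1 xA * dAk P d A.1 xA y))
              = ∑ xA : ∀ i : A.1, X i.1, ∑ y, Q (xA, y) * dAk P d A.1 xA y from
            Finset.sum_congr rfl fun xA _ => Finset.sum_congr rfl fun y _ => by
              have hm := (margA_pos hfull A.1 xA).ne'
              field_simp]
          rw [Fintype.sum_prod_type] at hdist
          exact hdist
        · intro A' _ hA'
          exact Finset.sum_eq_zero fun x _ => Finset.sum_eq_zero fun y _ => by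
            rw [if_neg hA', zero_mul, zero_mul, zero_mul]
        · intro h; exact absurd (Finset.mem_univ A) h
      · -- conditional mutual information equals mutInfo Q
        rw [condMI, Finset.sum_eq_single A]
        · rw [if_pos rfl, one_mul, ← hmi]
          congr 1
          funext p
          obtain ⟨xA, y⟩ := p
          dsimp only
          rw [hWA0, mul_comm, div_mul_cancel₀ _ (margA_pos hfull A.1 xA).ne']
        · intro A' _ hA'; rw [if_neg hA', zero_mul]
        · intro h; exact absurd (Finset.mem_univ A) h
    have hSAne : {r | ∃ Q : (∀ i : A.1, X i.1) × Y → ℝ, IsPMF Q ∧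
        (∀ xA, ∑ y, Q (xA, y) = margA P A.1 xA) ∧
        (∑ p : (∀ i : A.1, X i.1) × Y, Q p * dAk P d A.1 p.1 p.2) ≤ Δ ∧
        mutInfo Q = r}.Nonempty := by
      refine ⟨mutInfo (fun p : (∀ i : A.1, X i.1) × Y =>
          margA P A.1 p.1 * (if p.2 = ystar A.1 p.1 then 1 else 0)),
        fun p => margA P A.1 p.1 * (if p.2 = ystar A.1 p.1 then 1 else 0),
        joint_isPMF (W := fun xA y => if y = ystar A.1 xA then 1 else 0) hP A.1
          (fun xA => ⟨fun y => by dsimp only; split <;> norm_num, by simp⟩), ?_, ?_, rfl⟩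
      · intro xA
        dsimp only
        rw [← Finset.mul_sum]
        simp
      · rw [Fintype.sum_prod_type]
        rw [show (∑ xA : ∀ i : A.1, X i.1, ∑ y,
              margA P A.1 xA * (if y = ystar A.1 xA then (1:ℝ) else 0) * dAk P d A.1 xA y)
            = ∑ xA : ∀ i : A.1, X i.1, margA P A.1 xA * dAk P d A.1 xA (ystar A.1 xA) from
          Finset.sum_congr rfl fun xA _ => by simp [mul_ite, ite_mul]]
        rw [show (∑ xA : ∀ i : A.1, X i.1, margA P A.1 xA * dAk P d A.1 xA (ystar A.1 xA))
            = DminA P d A.1 from Finset.sum_congr rfl fun xA _ => by rw [hystar]]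
        exact hmax A
    rw [hRi Δ, RAk]
    exact csInf_le_csInf (hBdd Δ) hSAne hsub
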